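/- For all simple roots α, β ∈ Π, the operators on R satisfy K_α E_β = q^{(α,β)} E_β K_α and K_α F_β = q^{−(α,β)} F_β K_α as ℚ(q)-linear endomorphisms of R. -/

import Mathlib

/-!
The adjoint representation of a simply-laced quantum group, realized concretely on the
`ℚ(q)`-vector space with basis `{x_μ : μ ∈ Φ} ∪ {h_α : α ∈ Π}`.
-/

noncomputable section

open Polynomial

/-- The field `ℚ(q)` of rational functions over `ℚ`. -/
abbrev Qq : Type := RatFunc ℚ

/-- The indeterminate `q ∈ ℚ(q)`. -/
def qv : Qq := RatFunc.X

/-- A datum abstracting a simply-laced root system `Φ` with base `Π`, normalized so that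
`(α, α) = 2` for roots: a symmetric bilinear form `B` together with the standard
combinatorial facts about pairings of roots and simple roots that hold in any finite
reduced irreducible crystallographic simply-laced root system. -/
structure SimplyLacedDatum (E : Type) [AddCommGroup E] [Module ℚ E] where
  /-- the inner product `(·,·)` -/
  B : E →ₗ[ℚ] E →ₗ[ℚ] ℚ
  symm : ∀ x y : E, B x y = B y x
  /-- the set of roots `Φ` -/
  Phi : Set E
  /-- the base `Π` of simple roots -/
  Base : Set E
  base_sub : Base ⊆ Phi
  phi_finite : Phi.Finite
  zero_not_mem : (0 : E) ∉ Phi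
  crystallographic : ∀ μ ∈ Phi, ∀ ν ∈ Phi, ∃ n : ℤ, B μ ν = n
  norm_two : ∀ μ ∈ Phi, B μ μ = 2
  neg_mem : ∀ μ ∈ Phi, -μ ∈ Phi
  base_pair : ∀ α ∈ Base, ∀ β ∈ Base, α ≠ β → B α β = 0 ∨ B α β = -1
  pair_range : ∀ μ ∈ Phi, ∀ α ∈ Base,
      B μ α = -2 ∨ B μ α = -1 ∨ B μ α = 0 ∨ B μ α = 1 ∨ B μ α = 2
  pair_two_iff : ∀ μ ∈ Phi, ∀ α ∈ Base, (B μ α = 2 ↔ μ = α)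
  pair_neg_two_iff : ∀ μ ∈ Phi, ∀ α ∈ Base, (B μ α = -2 ↔ μ = -α)
  add_mem : ∀ μ ∈ Phi, ∀ α ∈ Base, B μ α = -1 → μ + α ∈ Phi
  sub_mem : ∀ μ ∈ Phi, ∀ α ∈ Base, B μ α = 1 → μ - α ∈ Phi

namespace SimplyLacedDatum

variable {E : Type} [AddCommGroup E] [Module ℚ E] (D : SimplyLacedDatum E)

/-- The index set for the canonical basis of the adjoint representation:
one index for each root `μ ∈ Φ` (the vector `x_μ`) and one for each simple root
`α ∈ Π` (the vector `h_α`). -/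
def Idx : Type := {μ : E // μ ∈ D.Phi} ⊕ {α : E // α ∈ D.Base}

/-- The adjoint representation `R`, as the free `ℚ(q)`-module on `Idx`. -/
def R : Type := D.Idx →₀ Qq

instance : AddCommGroup D.R := inferInstanceAs (AddCommGroup (D.Idx →₀ Qq))
instance : Module Qq D.R := inferInstanceAs (Module Qq (D.Idx →₀ Qq))

/-- The canonical basis vector `x_μ`, for a root `μ ∈ Φ`. -/
def xv (μ : E) (h : μ ∈ D.Phi) : D.R := Finsupp.single (Sum.inl ⟨μ, h⟩) 1

/-- The canonical basis vector `h_α`, for a simple root `α ∈ Π`. -/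
def hv (α : E) (h : α ∈ D.Base) : D.R := Finsupp.single (Sum.inr ⟨α, h⟩) 1

/-- The `ℚ(q)`-linear operator on `R` sending the basis vector indexed by `i` to `v i`. -/
def opOf (v : D.Idx → D.R) : D.R →ₗ[Qq] D.R :=
  Finsupp.lsum Qq fun i => LinearMap.toSpanSingleton Qq D.R (v i)

open Classical in
/-- The images of the basis vectors under `E_α`. -/
def Evec (α : E) (hα : α ∈ D.Base) : D.Idx → D.R := fun i =>
  match i with
  | Sum.inl μ =>
      if h : D.B μ.1 α = -1 then D.xv (μ.1 + α) (D.add_mem μ.1 μ.2 α hα h)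
      else if D.B μ.1 α = -2 then D.hv α hα
      else 0
  | Sum.inr β =>
      if β.1 = α then (qv + qv⁻¹) • D.xv α (D.base_sub hα)
      else if D.B β.1 α = -1 then D.xv α (D.base_sub hα)
      else 0

open Classical in
/-- The images of the basis vectors under `F_α`. -/
def Fvec (α : E) (hα : α ∈ D.Base) : D.Idx → D.R := fun i =>
  match i with
  | Sum.inl μ =>
      if h : D.B μ.1 α = 1 then D.xv (μ.1 - α) (D.sub_mem μ.1 μ.2 α hα h)
      else if D.B μ.1 α = 2 then D.hv α hα
      else 0
  | Sum.inr β =>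
      if β.1 = α then (qv + qv⁻¹) • D.xv (-α) (D.neg_mem α (D.base_sub hα))
      else if D.B β.1 α = -1 then D.xv (-α) (D.neg_mem α (D.base_sub hα))
      else 0

/-- The images of the basis vectors under `K_α`: `K_α x_μ = q^{(α,μ)} x_μ`,
`K_α h_β = h_β`. -/
def Kvec (α : E) (hα : α ∈ D.Base) : D.Idx → D.R := fun i =>
  match i with
  | Sum.inl μ => qv ^ (D.B α μ.1).num • D.xv μ.1 μ.2
  | Sum.inr β => D.hv β.1 β.2

/-- The images of the basis vectors under `K_α⁻¹`: `K_α⁻¹ x_μ = q^{−(α,μ)} x_μ`,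
`K_α⁻¹ h_β = h_β`. -/
def Kinvvec (α : E) (hα : α ∈ D.Base) : D.Idx → D.R := fun i =>
  match i with
  | Sum.inl μ => qv ^ (-(D.B α μ.1).num) • D.xv μ.1 μ.2
  | Sum.inr β => D.hv β.1 β.2

/-- The operator `E_α` on the adjoint representation. -/
def opE (α : E) (hα : α ∈ D.Base) : D.R →ₗ[Qq] D.R := D.opOf (D.Evec α hα)

/-- The operator `F_α` on the adjoint representation. -/
def opF (α : E) (hα : α ∈ D.Base) : D.R →ₗ[Qq] D.R := D.opOf (D.Fvec α hα)

/-- The operator `K_α` on the adjoint representation. -/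
def opK (α : E) (hα : α ∈ D.Base) : D.R →ₗ[Qq] D.R := D.opOf (D.Kvec α hα)

/-- The operator `K_α⁻¹` on the adjoint representation. -/
def opKinv (α : E) (hα : α ∈ D.Base) : D.R →ₗ[Qq] D.R := D.opOf (D.Kinvvec α hα)

end SimplyLacedDatum

end

noncomputable section
namespace SimplyLacedDatum
variable {E : Type} [AddCommGroup E] [Module ℚ E] (D : SimplyLacedDatum E)

lemma opOf_single (v : D.Idx → D.R) (i : D.Idx) (c : Qq) :
    D.opOf v (Finsupp.single i c) = c • v i := by
  show (Finsupp.lsum Qq fun i => LinearMap.toSpanSingleton Qq D.R (v i)) (Finsupp.single i c)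
      = c • v i
  rw [Finsupp.lsum_single, LinearMap.toSpanSingleton_apply]

lemma opOf_xv (v : D.Idx → D.R) (μ : E) (h : μ ∈ D.Phi) :
    D.opOf v (D.xv μ h) = v (Sum.inl ⟨μ, h⟩) :=
  (D.opOf_single v _ 1).trans (one_smul _ _)

lemma opOf_hv (v : D.Idx → D.R) (γ : E) (h : γ ∈ D.Base) :
    D.opOf v (D.hv γ h) = v (Sum.inr ⟨γ, h⟩) :=
  (D.opOf_single v _ 1).trans (one_smul _ _)

lemma opK_xv (α : E) (hα : α ∈ D.Base) (μ : E) (h : μ ∈ D.Phi) :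
    D.opK α hα (D.xv μ h) = qv ^ (D.B α μ).num • D.xv μ h := by
  exact D.opOf_xv _ μ h

lemma opK_hv (α : E) (hα : α ∈ D.Base) (γ : E) (h : γ ∈ D.Base) :
    D.opK α hα (D.hv γ h) = D.hv γ h := by
  exact D.opOf_hv _ γ h

lemma qv_ne_zero : (qv : Qq) ≠ 0 := RatFunc.X_ne_zero

lemma num_add (m n : ℤ) : ((m : ℚ) + (n : ℚ)).num = m + n := by
  rw [← Int.cast_add, Rat.num_intCast]

theorem K_conjugation' (α : E) (hα : α ∈ D.Base) (β : E) (hβ : β ∈ D.Base) :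
    D.opK α hα ∘ₗ D.opE β hβ = qv ^ (D.B α β).num • (D.opE β hβ ∘ₗ D.opK α hα) ∧
    D.opK α hα ∘ₗ D.opF β hβ = qv ^ (-(D.B α β).num) • (D.opF β hβ ∘ₗ D.opK α hα) := by
  have hαΦ := D.base_sub hα
  have hβΦ := D.base_sub hβ
  obtain ⟨n, hn⟩ := D.crystallographic α hαΦ β hβΦ
  have key : ∀ (i : D.Idx),
      D.opK α hα (D.Evec β hβ i) = qv ^ (D.B α β).num • D.opE β hβ (D.Kvec α hα i) ∧
      D.opK α hα (D.Fvec β hβ i) = qv ^ (-(D.B α β).num) • D.opF β hβ (D.Kvec α hα i) := by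
    rintro (⟨μ, hμ⟩ | ⟨γ, hγ⟩)
    · obtain ⟨m, hm⟩ := D.crystallographic α hαΦ μ hμ
      have hE : D.opE β hβ (D.Kvec α hα (Sum.inl ⟨μ, hμ⟩)) =
          qv ^ (D.B α μ).num • D.Evec β hβ (Sum.inl ⟨μ, hμ⟩) := by
        show D.opOf (D.Evec β hβ) (qv ^ (D.B α μ).num • D.xv μ hμ) = _
        rw [map_smul, opOf_xv]
      have hF : D.opF β hβ (D.Kvec α hα (Sum.inl ⟨μ, hμ⟩)) =
          qv ^ (D.B α μ).num • D.Fvec β hβ (Sum.inl ⟨μ, hμ⟩) := by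
        show D.opOf (D.Fvec β hβ) (qv ^ (D.B α μ).num • D.xv μ hμ) = _
        rw [map_smul, opOf_xv]
      rw [hE, hF]
      constructor
      · simp only [Evec]
        split_ifs with h1 h2
        · rw [opK_xv, smul_smul]
          congr 1
          rw [map_add, hn, hm, num_add, Rat.num_intCast, Rat.num_intCast,
            zpow_add₀ qv_ne_zero, mul_comm]
        · have hμβ : μ = -β := (D.pair_neg_two_iff μ hμ β hβ).mp h2
          rw [opK_hv, smul_smul]
          have hmn : D.B α μ = ((-n : ℤ) : ℚ) := by rw [hμβ, map_neg, hn]; push_cast; ring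
          rw [hn, hmn, Rat.num_intCast, Rat.num_intCast, ← zpow_add₀ qv_ne_zero]
          simp
        · simp only [map_zero, smul_zero]
      · simp only [Fvec]
        split_ifs with h1 h2
        · rw [opK_xv, smul_smul]
          congr 1
          rw [map_sub, hn, hm, ← Int.cast_sub, Rat.num_intCast, Rat.num_intCast,
            Rat.num_intCast, sub_eq_neg_add, zpow_add₀ qv_ne_zero]
        · have hμβ : μ = β := (D.pair_two_iff μ hμ β hβ).mp h2
          rw [opK_hv, smul_smul, hμβ, hn, Rat.num_intCast, ← zpow_add₀ qv_ne_zero]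
          simp
        · simp only [map_zero, smul_zero]
    · have hE : D.opE β hβ (D.Kvec α hα (Sum.inr ⟨γ, hγ⟩)) = D.Evec β hβ (Sum.inr ⟨γ, hγ⟩) := by
        exact D.opOf_hv _ γ hγ
      have hF : D.opF β hβ (D.Kvec α hα (Sum.inr ⟨γ, hγ⟩)) = D.Fvec β hβ (Sum.inr ⟨γ, hγ⟩) := by
        exact D.opOf_hv _ γ hγ
      rw [hE, hF]
      constructor
      · simp only [Evec]
        split_ifs with h1 h2
        · rw [map_smul, opK_xv, smul_smul, smul_smul, mul_comm]
        · rw [opK_xv]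
        · simp only [map_zero, smul_zero]
      · simp only [Fvec]
        split_ifs with h1 h2
        · rw [map_smul, opK_xv, smul_smul, smul_smul]
          have hneg : D.B α (-β) = ((-n : ℤ) : ℚ) := by rw [map_neg, hn]; push_cast; ring
          rw [hneg, Rat.num_intCast, hn, Rat.num_intCast, mul_comm]
        · rw [opK_xv]
          have hneg : D.B α (-β) = ((-n : ℤ) : ℚ) := by rw [map_neg, hn]; push_cast; ring
          rw [hneg, Rat.num_intCast, hn, Rat.num_intCast]
        · simp only [map_zero, smul_zero]
  constructor
  · refine Finsupp.lhom_ext fun i c => ?_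
    have h := (key i).1
    show D.opK α hα (D.opE β hβ (Finsupp.single i c)) =
      qv ^ (D.B α β).num • D.opE β hβ (D.opK α hα (Finsupp.single i c))
    unfold opE opK at h ⊢
    rw [opOf_single, map_smul, h, opOf_single, map_smul, smul_comm]
  · refine Finsupp.lhom_ext fun i c => ?_
    have h := (key i).2
    show D.opK α hα (D.opF β hβ (Finsupp.single i c)) =
      qv ^ (-(D.B α β).num) • D.opF β hβ (D.opK α hα (Finsupp.single i c))
    unfold opF opK at h ⊢
    rw [opOf_single, map_smul, h, opOf_single, map_smul, smul_comm]

end SimplyLacedDatum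
end


/-- for all simple roots `α, β`, on the adjoint representation `R` one
has `K_α E_β = q^{(α,β)} E_β K_α` and `K_α F_β = q^{−(α,β)} F_β K_α`. -/
theorem SimplyLacedDatum.K_conjugation {E : Type} [AddCommGroup E] [Module ℚ E]
    (D : SimplyLacedDatum E) (α : E) (hα : α ∈ D.Base) (β : E) (hβ : β ∈ D.Base) :
    D.opK α hα ∘ₗ D.opE β hβ = qv ^ (D.B α β).num • (D.opE β hβ ∘ₗ D.opK α hα) ∧
    D.opK α hα ∘ₗ D.opF β hβ = qv ^ (-(D.B α β).num) • (D.opF β hβ ∘ₗ D.opK α hα) := by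
  exact D.K_conjugation' α hα β hβ
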